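/- Assume the valuation setup with sum formula on a field K. Let u = (u₁, u₂) and v = (v₁, v₂) be distinct pairs of elements of K^* with u₁ + u₂ = 1 and v₁ + v₂ = 1. If v_i(u₁) = v_i(v₁) and v_i(u₂) = v_i(v₂) for every i ∈ I, then v_i(u₁) = v_i(u₂) = 0 for every i ∈ I. -/

import Mathlib

/-- A valuation setup with sum formula on a field `K`: for each `i` in the index set `I`, a
map `v i : K → ℤ` which restricts to a group homomorphism `Kˣ → ℤ` satisfying the
ultrametric inequality, with only finitely many `v i` nonzero at each `x ≠ 0`, positive
integer degrees `deg i`, and the sum formula `Σ_i v i x · deg i = 0` for `x ≠ 0`. -/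
structure ValuationSetup (K : Type*) [Field K] (I : Type*) where
  v : I → K → ℤ
  deg : I → ℕ
  deg_pos : ∀ i, 0 < deg i
  v_mul : ∀ i (x y : K), x ≠ 0 → y ≠ 0 → v i (x * y) = v i x + v i y
  v_add : ∀ i (x y : K), x ≠ 0 → y ≠ 0 → x + y ≠ 0 → min (v i x) (v i y) ≤ v i (x + y)
  finite_support : ∀ x : K, x ≠ 0 → {i | v i x ≠ 0}.Finite
  sum_formula : ∀ x : K, x ≠ 0 → ∑ᶠ i, v i x * (deg i : ℤ) = 0

/-- The homogeneous height `H^hom(P) = −Σ_i min{v i (P j) : P j ≠ 0} · deg i` of a (nonzero)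
vector `P`. -/
noncomputable def Hhom {K : Type*} [Field K] {I : Type*} (VS : ValuationSetup K I)
    {m : ℕ} (P : Fin m → K) : ℤ :=
  -∑ᶠ i, sInf ((fun j => VS.v i (P j)) '' {j | P j ≠ 0}) * (VS.deg i : ℤ)

lemma VS_v_one {K : Type*} [Field K] {I : Type*} (VS : ValuationSetup K I) (i : I) :
    VS.v i 1 = 0 := by
  have := VS.v_mul i 1 1 one_ne_zero one_ne_zero
  simp at this; omega

lemma VS_v_neg {K : Type*} [Field K] {I : Type*} (VS : ValuationSetup K I) (i : I)
    (x : K) (hx : x ≠ 0) : VS.v i (-x) = VS.v i x := by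
  have hm1 : VS.v i (-1 : K) = 0 := by
    have h := VS.v_mul i (-1) (-1) (by norm_num) (by norm_num)
    simp [VS_v_one VS i] at h
    omega
  have := VS.v_mul i (-1) x (by norm_num) hx
  rw [neg_one_mul] at this
  rw [this, hm1, zero_add]

/-- If a nonnegative finitely-supported function weighted by positive degrees sums to 0,
it is identically 0. -/
lemma VS_key {K : Type*} [Field K] {I : Type*} (VS : ValuationSetup K I) (f : I → ℤ)
    (hnn : ∀ i, 0 ≤ f i) (hfin : (Function.support f).Finite)
    (hsum : ∑ᶠ i, f i * (VS.deg i : ℤ) = 0) : ∀ i, f i = 0 := by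
  intro j
  by_contra hj
  have hfin' : (Function.support fun i => f i * (VS.deg i : ℤ)).Finite := by
    apply hfin.subset
    intro i hi
    simp only [Function.mem_support] at hi ⊢
    intro h; apply hi; rw [h, zero_mul]
  rw [finsum_eq_sum _ hfin'] at hsum
  have hjmem : j ∈ hfin'.toFinset := by
    simp only [Set.Finite.mem_toFinset, Function.mem_support]
    have := VS.deg_pos j
    have := hnn j
    positivity
  have hpos : 0 < ∑ i ∈ hfin'.toFinset, f i * (VS.deg i : ℤ) := by
    apply Finset.sum_pos' (fun i _ => by have := hnn i; positivity)
    refine ⟨j, hjmem, ?_⟩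
    have := VS.deg_pos j
    have hfj : 0 < f j := lt_of_le_of_ne (hnn j) (Ne.symm hj)
    positivity
  omega

/-- If `v i x ≤ v i y` for all `i` (both nonzero), then equality holds. -/
lemma VS_eq_of_le {K : Type*} [Field K] {I : Type*} (VS : ValuationSetup K I)
    (x y : K) (hx : x ≠ 0) (hy : y ≠ 0) (hle : ∀ i, VS.v i x ≤ VS.v i y) :
    ∀ i, VS.v i x = VS.v i y := by
  have hfx := VS.finite_support x hx
  have hfy := VS.finite_support y hy
  have hfinx : (Function.support fun i => VS.v i x * (VS.deg i : ℤ)).Finite := by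
    apply hfx.subset; intro i hi; simp only [Function.mem_support] at hi ⊢
    intro h; apply hi; rw [h, zero_mul]
  have hfiny : (Function.support fun i => VS.v i y * (VS.deg i : ℤ)).Finite := by
    apply hfy.subset; intro i hi; simp only [Function.mem_support] at hi ⊢
    intro h; apply hi; rw [h, zero_mul]
  have key := VS_key VS (fun i => VS.v i y - VS.v i x)
    (fun i => by have := hle i; omega)
    (by
      apply (hfx.union hfy).subset
      intro i hi
      simp only [Function.mem_support] at hi
      by_contra h
      simp only [Set.mem_union, Set.mem_setOf_eq, not_or, not_not] at h
      omega)
    (by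
      have : (fun i => (VS.v i y - VS.v i x) * (VS.deg i : ℤ))
          = fun i => VS.v i y * (VS.deg i : ℤ) - VS.v i x * (VS.deg i : ℤ) := by
        funext i; ring
      rw [this, finsum_sub_distrib hfiny hfinx, VS.sum_formula x hx, VS.sum_formula y hy]
      ring)
  intro i
  have := key i
  omega

/-- in the valuation setup, if `u = (u₁, u₂)` and `v = (v₁, v₂)` are distinct
pairs of nonzero elements with `u₁ + u₂ = 1` and `v₁ + v₂ = 1`, and `v i u₁ = v i v₁` and
`v i u₂ = v i v₂` for all `i`, then `v i u₁ = v i u₂ = 0` for all `i`. -/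
theorem valuations_equal_implies_zero {K : Type*} [Field K] {I : Type*}
    (VS : ValuationSetup K I) (u₁ u₂ v₁ v₂ : K)
    (hu₁ : u₁ ≠ 0) (hu₂ : u₂ ≠ 0) (hv₁ : v₁ ≠ 0) (hv₂ : v₂ ≠ 0)
    (husol : u₁ + u₂ = 1) (hvsol : v₁ + v₂ = 1) (hne : (u₁, u₂) ≠ (v₁, v₂))
    (heq : ∀ i, VS.v i u₁ = VS.v i v₁ ∧ VS.v i u₂ = VS.v i v₂) :
    ∀ i, VS.v i u₁ = 0 ∧ VS.v i u₂ = 0 := by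
  set w : K := u₁ - v₁ with hw
  have hwne : w ≠ 0 := by
    intro h
    apply hne
    have h1 : u₁ = v₁ := by rw [hw] at h; linear_combination h
    have h2 : u₂ = v₂ := by linear_combination husol - hvsol - h1
    rw [h1, h2]
  have hw2 : w = v₂ - u₂ := by rw [hw]; linear_combination husol - hvsol
  -- v i u₁ ≤ v i w
  have h1 : ∀ i, VS.v i u₁ ≤ VS.v i w := by
    intro i
    have := VS.v_add i u₁ (-v₁) hu₁ (neg_ne_zero.mpr hv₁) (by rw [← sub_eq_add_neg]; exact hwne)
    rw [VS_v_neg VS i v₁ hv₁, ← (heq i).1, min_self, ← sub_eq_add_neg] at this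
    exact this
  have h2 : ∀ i, VS.v i u₂ ≤ VS.v i w := by
    intro i
    have := VS.v_add i v₂ (-u₂) hv₂ (neg_ne_zero.mpr hu₂)
      (by rw [← sub_eq_add_neg, ← hw2]; exact hwne)
    rw [VS_v_neg VS i u₂ hu₂, ← (heq i).2, min_self, ← sub_eq_add_neg, ← hw2] at this
    exact this
  have e1 := VS_eq_of_le VS u₁ w hu₁ hwne h1
  have e2 := VS_eq_of_le VS u₂ w hu₂ hwne h2
  have heq12 : ∀ i, VS.v i u₁ = VS.v i u₂ := fun i => by rw [e1 i, e2 i]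
  -- v i u₁ ≤ 0
  have hle0 : ∀ i, VS.v i u₁ ≤ 0 := by
    intro i
    have := VS.v_add i u₁ u₂ hu₁ hu₂ (by rw [husol]; exact one_ne_zero)
    rw [husol, VS_v_one VS i, heq12 i, min_self] at this
    rw [heq12 i]; exact this
  have key := VS_key VS (fun i => -VS.v i u₁)
    (fun i => by have := hle0 i; omega)
    (by
      apply (VS.finite_support u₁ hu₁).subset
      intro i hi
      simp only [Function.mem_support] at hi
      simpa using hi)
    (by
      have : (fun i => (-VS.v i u₁) * (VS.deg i : ℤ))
          = fun i => -(VS.v i u₁ * (VS.deg i : ℤ)) := by funext i; ring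
      rw [this, finsum_neg_distrib, VS.sum_formula u₁ hu₁, neg_zero])
  intro i
  have := key i
  constructor
  · omega
  · rw [← heq12 i]; omega
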